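/- Consider n agents and m items with multi-dimensional signals s_{jT} ≥ 0 (for each agent j and each subset T of items) and separable valuations v_{jT}(t) = g_{jT}(t_{−j}) + h_{jT}(t_j), with all g_{jT} and h_{jT} weakly increasing and nonnegative. Fix a partition of the agents into sets A and B and fix i ∈ B. For a report profile ρ (ρ_{jT} = s_{jT} for all j ≠ i, while ρ_{iT} is arbitrary), define for j ∈ B the proxy w_{jT}(ρ) := g_{jT}( (ρ_{·T})|_{(A) coordinates kept, B∖{j} coordinates zeroed, restricted to coordinates ≠ j} ) + h_{jT}(ρ_{jT}); define w_{−i} := max over allocations (T_j)_{j ∈ B∖{i}} of Σ_j w_{jT_j}(ρ) (this does not depend on ρ_i); and for any allocation (T_j)_{j∈B} maximizing Σ_{j∈B} w_{jT_j}(ρ), define the payment p_i(ρ) := g_{iT_i}( (ρ_{·T_i})_{−i} ) − g_{iT_i}( (ρ_{·T_i})_{−i} with the coordinates in B∖{i} zeroed ) − Σ_{j ∈ B∖{i}} w_{jT_j}(ρ) + w_{−i}. Then: (IC) for any misreport r_i, if (T'_j) maximizes Σ_{j∈B} w_{jT_j} under the profile (r_i, s_{−i}) and (T*_j) maximizes it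 under the truthful profile s, then v_{iT'_i}(s_{·T'_i}) − p_i(r_i, s_{−i}) ≤ v_{iT*_i}(s_{·T*_i}) − p_i(s); and (IR) v_{iT*_i}(s_{·T*_i}) − p_i(s) ≥ 0. -/
import Mathlib


/-- An allocation of the `m` items to the `n` agents: disjoint bundles. -/
def IsAlloc {n m : ℕ} (T : Fin n → Finset (Fin m)) : Prop :=
  ∀ i j : Fin n, i ≠ j → Disjoint (T i) (T j)

/-- Supremum of `f` over all allocations of the `m` items to the `n` agents. -/
noncomputable def allocSup {n m : ℕ} (f : (Fin n → Finset (Fin m)) → ℝ) : ℝ :=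
  ⨆ T : {T : Fin n → Finset (Fin m) // IsAlloc T}, f T.1

/-- Proxy value of agent `j` for bundle `T` under report profile `ρ`, with
potential-winner set `B`: the `g` part keeps the coordinates of `Bᶜ ∪ {j}` of
the reported signals for `T` and zeroes the rest, and the `h` part uses `j`'s
own report. -/
noncomputable def proxyW {n m : ℕ}
    (g : Fin n → Finset (Fin m) → (Fin n → ℝ) → ℝ)
    (h : Fin n → Finset (Fin m) → ℝ → ℝ) (B : Finset (Fin n))
    (ρ : Fin n → Finset (Fin m) → ℝ) (j : Fin n) (T : Finset (Fin m)) : ℝ :=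
  g j T (fun l => if l = j ∨ l ∉ B then ρ l T else 0) + h j T (ρ j T)

/-- Optimal proxy welfare of the agents in `B` other than `i`
(the mechanism's `w_{−i}`); it does not depend on agent `i`'s report. -/
noncomputable def wMinus {n m : ℕ}
    (g : Fin n → Finset (Fin m) → (Fin n → ℝ) → ℝ)
    (h : Fin n → Finset (Fin m) → ℝ → ℝ) (B : Finset (Fin n)) (i : Fin n)
    (ρ : Fin n → Finset (Fin m) → ℝ) : ℝ :=
  allocSup (fun T => ∑ j ∈ B.erase i, proxyW g h B ρ j (T j))

/-- The Random-Sampling VCG payment of winner `i ∈ B` under report profile `ρ`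
when the chosen allocation is `T`:
`g_{iT_i}(ρ_{·T_i}) − g_{iT_i}(ρ_{·T_i} with B∖{i} zeroed)
  − Σ_{j ∈ B∖{i}} w_{jT_j}(ρ) + w_{−i}(ρ)`
(the `g i (T i)` terms ignore coordinate `i`). -/
noncomputable def rsvcgPayment {n m : ℕ}
    (g : Fin n → Finset (Fin m) → (Fin n → ℝ) → ℝ)
    (h : Fin n → Finset (Fin m) → ℝ → ℝ) (B : Finset (Fin n)) (i : Fin n)
    (ρ : Fin n → Finset (Fin m) → ℝ) (T : Fin n → Finset (Fin m)) : ℝ :=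
  g i (T i) (fun l => ρ l (T i))
    - g i (T i) (fun l => if l ∈ B ∧ l ≠ i then 0 else ρ l (T i))
    - ∑ j ∈ B.erase i, proxyW g h B ρ j (T j)
    + wMinus g h B i ρ

/-- Theorem 5.1 (thm:rs-vcg), IC and IR: for any fixed partition with
potential-winner set `B` and any agent `i ∈ B`, with separable valuations
`v_{jT}(t) = g_{jT}(t_{−j}) + h_{jT}(t_j)` (each `g j T` ignoring coordinate
`j`, all `g`, `h` nonnegative and weakly increasing), truthful signals
`s j T ≥ 0`, a proxy-welfare-maximizing allocation `Tstar` at the truthful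
profile, and for any misreport `r` of agent `i` with proxy-welfare-maximizing
allocation `T'` at the misreported profile:
(IC) agent `i`'s true utility under the misreport is no more than under
truthful reporting; and (IR) truthful utility is nonnegative. -/
theorem rs_vcg_ic_ir (n m : ℕ)
    (s : Fin n → Finset (Fin m) → ℝ) (hs : ∀ j T, 0 ≤ s j T)
    (g : Fin n → Finset (Fin m) → (Fin n → ℝ) → ℝ)
    (h : Fin n → Finset (Fin m) → ℝ → ℝ)
    (hg_indep : ∀ j T (t : Fin n → ℝ) (c : ℝ),
      g j T (Function.update t j c) = g j T t)
    (hg_nonneg : ∀ j T (t : Fin n → ℝ), (∀ l, 0 ≤ t l) → 0 ≤ g j T t)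
    (hg_mono : ∀ j T (t t' : Fin n → ℝ), (∀ l, t l ≤ t' l) → g j T t ≤ g j T t')
    (hh_nonneg : ∀ j T c, 0 ≤ h j T c)
    (hh_mono : ∀ j T, Monotone (h j T))
    (B : Finset (Fin n)) (i : Fin n) (hi : i ∈ B)
    (Tstar : Fin n → Finset (Fin m)) (hTstar : IsAlloc Tstar)
    (hTstarMax : ∀ T, IsAlloc T →
      ∑ j ∈ B, proxyW g h B s j (T j) ≤ ∑ j ∈ B, proxyW g h B s j (Tstar j)) :
    (∀ r : Finset (Fin m) → ℝ,
      ∀ T' : Fin n → Finset (Fin m), IsAlloc T' →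
        (∀ T, IsAlloc T →
          ∑ j ∈ B, proxyW g h B (fun l U => if l = i then r U else s l U) j (T j)
            ≤ ∑ j ∈ B, proxyW g h B (fun l U => if l = i then r U else s l U) j (T' j)) →
        (g i (T' i) (fun l => s l (T' i)) + h i (T' i) (s i (T' i)))
            - rsvcgPayment g h B i (fun l U => if l = i then r U else s l U) T'
          ≤ (g i (Tstar i) (fun l => s l (Tstar i)) + h i (Tstar i) (s i (Tstar i)))
            - rsvcgPayment g h B i s Tstar)
    ∧ 0 ≤ (g i (Tstar i) (fun l => s l (Tstar i)) + h i (Tstar i) (s i (Tstar i)))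
            - rsvcgPayment g h B i s Tstar := by

  classical
  have hproxy_nonneg : ∀ j U, 0 ≤ proxyW g h B s j U := by
    intro j U
    unfold proxyW
    refine add_nonneg (hg_nonneg _ _ _ ?_) (hh_nonneg _ _ _)
    intro l
    by_cases hl : l = j ∨ l ∉ B <;> simp [hl, hs]
  have key : ∀ (ρ : Fin n → Finset (Fin m) → ℝ), (∀ l U, l ≠ i → ρ l U = s l U) →
      ∀ T : Fin n → Finset (Fin m),
      (g i (T i) (fun l => s l (T i)) + h i (T i) (s i (T i)))
          - rsvcgPayment g h B i ρ T
        = ∑ j ∈ B, proxyW g h B s j (T j) - wMinus g h B i s := by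
    intro ρ hρ T
    have e3 : ∀ (j : Fin n), j ≠ i → ∀ U, proxyW g h B ρ j U = proxyW g h B s j U := by
      intro j hji U
      unfold proxyW
      have harg : (fun l => if l = j ∨ l ∉ B then ρ l U else 0)
          = (fun l => if l = j ∨ l ∉ B then s l U else 0) := by
        funext l
        rcases eq_or_ne l i with rfl | hl
        · have h1 : ¬ (l = j ∨ l ∉ B) := by
            push_neg
            exact ⟨Ne.symm hji, hi⟩
          simp [h1]
        · rw [hρ l U hl]
      rw [harg, hρ j U hji]
    have e1 : g i (T i) (fun l => ρ l (T i)) = g i (T i) (fun l => s l (T i)) := by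
      have : (fun l => ρ l (T i)) = Function.update (fun l => s l (T i)) i (ρ i (T i)) := by
        funext l
        rcases eq_or_ne l i with rfl | hl
        · simp
        · simp [Function.update_of_ne hl, hρ l _ hl]
      rw [this, hg_indep]
    have e2 : g i (T i) (fun l => if l ∈ B ∧ l ≠ i then 0 else ρ l (T i))
        = g i (T i) (fun l => if l = i ∨ l ∉ B then s l (T i) else 0) := by
      have : (fun l => if l ∈ B ∧ l ≠ i then 0 else ρ l (T i))
          = Function.update (fun l => if l = i ∨ l ∉ B then s l (T i) else 0) i (ρ i (T i)) := by
        funext l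
        rcases eq_or_ne l i with rfl | hl
        · simp
        · by_cases hlB : l ∈ B <;>
            simp [Function.update_of_ne hl, hl, hlB, hρ l _ hl]
      rw [this, hg_indep]
    have e4 : wMinus g h B i ρ = wMinus g h B i s := by
      unfold wMinus
      congr 1
      funext T2
      exact Finset.sum_congr rfl fun j hj => e3 j (Finset.ne_of_mem_erase hj) _
    have e5 : ∑ j ∈ B.erase i, proxyW g h B ρ j (T j)
        = ∑ j ∈ B.erase i, proxyW g h B s j (T j) :=
      Finset.sum_congr rfl fun j hj => e3 j (Finset.ne_of_mem_erase hj) _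
    have e6 : ∑ j ∈ B, proxyW g h B s j (T j)
        = proxyW g h B s i (T i) + ∑ j ∈ B.erase i, proxyW g h B s j (T j) :=
      (Finset.add_sum_erase B _ hi).symm
    unfold rsvcgPayment
    rw [e1, e2, e4, e5, e6]
    unfold proxyW
    ring
  have hne : Nonempty {T : Fin n → Finset (Fin m) // IsAlloc T} :=
    ⟨⟨fun _ => ∅, fun _ _ _ => by simp⟩⟩
  have hwminus_le : wMinus g h B i s ≤ ∑ j ∈ B, proxyW g h B s j (Tstar j) := by
    unfold wMinus allocSup
    refine ciSup_le ?_
    rintro ⟨T, hT⟩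
    set T2 := Function.update T i (∅ : Finset (Fin m)) with hT2def
    have hT2 : IsAlloc T2 := by
      intro a b hab
      rcases eq_or_ne a i with rfl | ha
      · simp [T2]
      · rcases eq_or_ne b i with rfl | hb
        · simp [T2]
        · simpa [T2, Function.update_of_ne ha, Function.update_of_ne hb] using hT a b hab
    have hle : ∑ j ∈ B.erase i, proxyW g h B s j (T j)
        ≤ ∑ j ∈ B, proxyW g h B s j (T2 j) := by
      rw [← Finset.add_sum_erase B _ hi]
      have heq : ∑ j ∈ B.erase i, proxyW g h B s j (T2 j)
          = ∑ j ∈ B.erase i, proxyW g h B s j (T j) :=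
        Finset.sum_congr rfl fun j hj => by
          rw [hT2def, Function.update_of_ne (Finset.ne_of_mem_erase hj)]
      rw [heq]
      linarith [hproxy_nonneg i (T2 i)]
    exact hle.trans (hTstarMax T2 hT2)
  constructor
  · intro r T' hT' _
    rw [key _ (fun l U hl => by simp [hl]) T', key s (fun _ _ _ => rfl) Tstar]
    exact sub_le_sub_right (hTstarMax T' hT') _
  · rw [key s (fun _ _ _ => rfl) Tstar]
    linarith
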